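/- Let m(x) = x + i e^x on [0,∞) and g(x) = 1/(λ - m(x)) for λ ∈ Ω = {λ : Re λ ≥ a|Im λ|^{1/s} + b} (s > 1, a > 0, b > 1 with x - log(((x-b)/a)^s + 1) ≥ 1 for x ≥ b). Then for every n ∈ ℕ₀ and every d > 0 there is a constant C_{n,d} > 0, independent of λ, such that sup_{x ≥ 0} |g^{(n)}(x)| ≤ C_{n,d} e^{d|λ|^{1/s}} for all λ ∈ Ω. -/

import Mathlib

open Complex

/-- Terms of the Faà-di-Bruno-like expansion: each `(c, j, k)` represents
`c * e^{jx} * g(x)^k`. -/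
noncomputable def rkTerms : ℕ → List (ℂ × ℕ × ℕ)
  | 0 => [(1, 0, 1)]
  | n+1 => (rkTerms n).flatMap fun t =>
      [((t.2.1 : ℂ) * t.1, t.2.1, t.2.2), ((t.2.2 : ℂ) * t.1, t.2.1, t.2.2 + 1),
       ((t.2.2 : ℂ) * Complex.I * t.1, t.2.1 + 1, t.2.2 + 1)]

lemma rkTerms_inv (n : ℕ) : ∀ t ∈ rkTerms n, t.2.1 + 1 ≤ t.2.2 ∧ t.2.2 ≤ n + 1 := by
  induction n with
  | zero => simp [rkTerms]
  | succ n ih =>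
    intro t ht
    simp only [rkTerms, List.mem_flatMap, List.mem_cons, List.mem_singleton] at ht
    obtain ⟨u, hu, h⟩ := ht
    obtain ⟨h1, h2⟩ := ih u hu
    rcases h with rfl | rfl | rfl | h
    · exact ⟨by dsimp only; omega, by dsimp only; omega⟩
    · exact ⟨by dsimp only; omega, by dsimp only; omega⟩
    · exact ⟨by dsimp only; omega, by dsimp only; omega⟩
    · simp at h

noncomputable def rkVal (lam : ℂ) (x : ℝ) (t : ℂ × ℕ × ℕ) : ℂ :=
  t.1 * (Real.exp x : ℂ) ^ t.2.1 * ((lam - (x + Complex.I * Real.exp x))⁻¹) ^ t.2.2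

lemma hasDerivAt_pow_comp {f : ℝ → ℂ} {f' : ℂ} {x : ℝ} (h : HasDerivAt f f' x) (k : ℕ) :
    HasDerivAt (fun y => f y ^ k) ((k : ℂ) * f x ^ (k - 1) * f') x := by
  induction k with
  | zero => simpa using hasDerivAt_const x (1 : ℂ)
  | succ k ih =>
    have h2 := ih.mul h
    have hfe : (fun y => f y ^ (k+1)) = fun y => f y ^ k * f y := by
      funext y; rw [pow_succ]
    rw [hfe]
    convert h2 using 1
    · rfl
    · rfl
    rcases Nat.eq_zero_or_pos k with rfl | hk
    · simp
    · have h3 : f x ^ (k - 1) * f x = f x ^ k := by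
        rw [← pow_succ]; congr 1; omega
      have : ((k:ℂ)+1) * f x ^ k * f' = (k:ℂ) * (f x ^ (k-1) * f x) * f' + f x ^ k * f' := by
        rw [h3]; ring
      push_cast
      rw [this]; ring

lemma hasDerivAt_list_sum {α : Type*} (l : List α) (f : α → ℝ → ℂ) (f' : α → ℂ) (x : ℝ)
    (h : ∀ t ∈ l, HasDerivAt (f t) (f' t) x) :
    HasDerivAt (fun y => (l.map (fun t => f t y)).sum) ((l.map f').sum) x := by
  induction l with
  | nil => simpa using hasDerivAt_const x (0 : ℂ)
  | cons a l ih =>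
    simp only [List.map_cons, List.sum_cons]
    exact (h a (by simp)).add (ih fun t ht => h t (List.mem_cons_of_mem _ ht))

lemma hasDerivAt_rkDen (lam : ℂ) (x : ℝ) :
    HasDerivAt (fun y : ℝ => lam - (y + Complex.I * Real.exp y))
      (-(1 + Complex.I * Real.exp x)) x := by
  have h1 : HasDerivAt (fun y : ℝ => (y : ℂ)) 1 x := by
    simpa using (hasDerivAt_id x).ofReal_comp
  have h2 : HasDerivAt (fun y : ℝ => (Real.exp y : ℂ)) (Real.exp x) x :=
    (Real.hasDerivAt_exp x).ofReal_comp
  have h3 := (h1.add (h2.const_mul Complex.I)).const_sub lam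
  convert h3 using 1
  · rfl
  · rfl

lemma hasDerivAt_rkG (lam : ℂ) (x : ℝ)
    (hne : lam - (x + Complex.I * Real.exp x) ≠ 0) :
    HasDerivAt (fun y : ℝ => (lam - (y + Complex.I * Real.exp y))⁻¹)
      ((1 + Complex.I * Real.exp x) * ((lam - (x + Complex.I * Real.exp x))⁻¹) ^ 2) x := by
  have hinv : HasDerivAt (fun z : ℂ => z⁻¹)
      (-((lam - (x + Complex.I * Real.exp x)) ^ 2)⁻¹) (lam - (x + Complex.I * Real.exp x)) :=
    hasDerivAt_inv hne
  have h := HasDerivAt.comp (h₂ := fun z : ℂ => z⁻¹) (x := x) hinv (hasDerivAt_rkDen lam x)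
  convert h using 1
  · rfl
  · rfl
  rw [inv_pow]; ring

lemma hasDerivAt_rkVal (lam : ℂ) (x : ℝ)
    (hne : lam - (x + Complex.I * Real.exp x) ≠ 0)
    (c : ℂ) (j k : ℕ) (hk : 1 ≤ k) :
    HasDerivAt (fun y => rkVal lam y (c, j, k))
      (rkVal lam x ((j : ℂ) * c, j, k) + rkVal lam x ((k : ℂ) * c, j, k + 1)
        + rkVal lam x ((k : ℂ) * Complex.I * c, j + 1, k + 1)) x := by
  have hE : HasDerivAt (fun y : ℝ => (Real.exp y : ℂ)) (Real.exp x) x :=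
    (Real.hasDerivAt_exp x).ofReal_comp
  have hEj := hasDerivAt_pow_comp hE j
  have hGk := hasDerivAt_pow_comp (hasDerivAt_rkG lam x hne) k
  have h := ((hEj.mul hGk).const_mul c)
  convert h using 1
  · rfl
  · funext y
    simp only [rkVal, mul_assoc]
    rfl
  simp only [rkVal]
  set E : ℂ := (Real.exp x : ℂ) with hEdef
  set G : ℂ := (lam - (x + Complex.I * Real.exp x))⁻¹ with hGdef
  have hEj' : (j : ℂ) * E ^ (j - 1) * E = (j : ℂ) * E ^ j := by
    rcases Nat.eq_zero_or_pos j with rfl | hj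
    · simp
    · rw [mul_assoc, ← pow_succ]; congr 2; omega
  have hGk' : G ^ (k - 1) * G ^ 2 = G ^ (k + 1) := by
    rw [← pow_add]; congr 1; omega
  calc (j : ℂ) * c * E ^ j * G ^ k + (k : ℂ) * c * E ^ j * G ^ (k+1)
        + (k : ℂ) * Complex.I * c * E ^ (j+1) * G ^ (k+1)
      = ((j:ℂ) * E ^ j) * (c * G ^ k)
        + c * ((k:ℂ) * (E ^ j * (G ^ (k-1) * G ^ 2))
          + (k:ℂ) * Complex.I * (E ^ (j+1) * (G ^ (k-1) * G ^ 2))) := by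
        rw [hGk']; ring
    _ = c * ((j:ℂ) * E ^ (j-1) * E * G ^ k
          + E ^ j * ((k:ℂ) * G ^ (k-1) * ((1 + Complex.I * E) * G ^ 2))) := by
        rw [hEj', pow_succ E j]; ring

lemma sum_map_bind {α β : Type*} (l : List α) (f : α → List β) (g : β → ℂ) :
    ((l.flatMap f).map g).sum = (l.map fun a => ((f a).map g).sum).sum := by
  induction l with
  | nil => simp
  | cons a l ih => simp [ih]

lemma rk_formula (lam : ℂ) (hne : ∀ y : ℝ, lam - (y + Complex.I * Real.exp y) ≠ 0) (n : ℕ) :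
    iteratedDeriv n (fun y : ℝ => (lam - (y + Complex.I * Real.exp y))⁻¹)
      = fun x => ((rkTerms n).map (rkVal lam x)).sum := by
  induction n with
  | zero =>
    funext x
    simp [rkTerms, rkVal, iteratedDeriv_zero]
  | succ n ih =>
    funext x
    rw [iteratedDeriv_succ, ih]
    have hstep : ∀ t ∈ rkTerms n, HasDerivAt (fun y => rkVal lam y t)
        ((((fun t : ℂ × ℕ × ℕ =>
            [((t.2.1 : ℂ) * t.1, t.2.1, t.2.2), ((t.2.2 : ℂ) * t.1, t.2.1, t.2.2 + 1),
             ((t.2.2 : ℂ) * Complex.I * t.1, t.2.1 + 1, t.2.2 + 1)]) t).map (rkVal lam x)).sum)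
        x := by
      intro t ht
      obtain ⟨c, j, k⟩ := t
      have hk := (rkTerms_inv n _ ht).1
      have h := hasDerivAt_rkVal lam x (hne x) c j k (by simp only [Prod.snd] at hk; omega)
      simp only [List.map_cons, List.map_nil, List.sum_cons, List.sum_nil, add_zero]
      simpa [add_assoc] using h
    have h := hasDerivAt_list_sum (rkTerms n) (fun t y => rkVal lam y t) _ x hstep
    have hd : deriv (fun y => ((rkTerms n).map (rkVal lam y)).sum) x
        = (((rkTerms n).map (fun t : ℂ × ℕ × ℕ =>
            (([((t.2.1 : ℂ) * t.1, t.2.1, t.2.2), ((t.2.2 : ℂ) * t.1, t.2.1, t.2.2 + 1),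
             ((t.2.2 : ℂ) * Complex.I * t.1, t.2.1 + 1, t.2.2 + 1)]).map (rkVal lam x)).sum))).sum :=
      h.deriv
    rw [hd, show rkTerms (n+1) = (rkTerms n).flatMap fun t =>
        [((t.2.1 : ℂ) * t.1, t.2.1, t.2.2), ((t.2.2 : ℂ) * t.1, t.2.1, t.2.2 + 1),
         ((t.2.2 : ℂ) * Complex.I * t.1, t.2.1 + 1, t.2.2 + 1)] from rfl,
      sum_map_bind]

lemma poly_absorb (n : ℕ) (d s : ℝ) (hd : 0 < d) (hs : 1 < s) :
    ∃ C : ℝ, 0 < C ∧ ∀ t : ℝ, 1 ≤ t →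
      (1 + t) ^ n ≤ C * Real.exp (d * t ^ (1 / s)) := by
  set r : ℝ := n * s / d + 1 with hrdef
  have hs0 : (0:ℝ) < s := lt_trans one_pos hs
  have hr1 : 1 ≤ r := by
    have h : (0:ℝ) ≤ n * s / d := by positivity
    rw [hrdef]; linarith
  have hr0 : (0:ℝ) < r := lt_of_lt_of_le one_pos hr1
  refine ⟨2 ^ n * Real.exp (n * s * Real.log r), by positivity, ?_⟩
  intro t ht
  have ht0 : (0:ℝ) < t := lt_of_lt_of_le one_pos ht
  set u : ℝ := t ^ (1/s) with hudef
  have hu0 : 0 < u := Real.rpow_pos_of_pos ht0 _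
  have hlogt : Real.log t = s * Real.log u := by
    rw [hudef, Real.log_rpow ht0]; field_simp
  have hlogu : Real.log u ≤ Real.log r + u / r := by
    have h1 := Real.log_le_sub_one_of_pos (show (0:ℝ) < u / r by positivity)
    have h2 : Real.log (u / r) = Real.log u - Real.log r :=
      Real.log_div (ne_of_gt hu0) (ne_of_gt hr0)
    rw [h2] at h1; linarith
  have hfrac : (n:ℝ) * s / r ≤ d := by
    rw [div_le_iff₀ hr0, hrdef]
    have : d * (n * s / d + 1) = n * s + d := by field_simp
    rw [this]; linarith
  have hkey : (n:ℝ) * Real.log t ≤ n * s * Real.log r + d * u := by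
    have hns : (0:ℝ) ≤ (n:ℝ) * s := by positivity
    have h3 : (n:ℝ) * s * Real.log u ≤ n * s * (Real.log r + u / r) :=
      mul_le_mul_of_nonneg_left hlogu hns
    have h4 : (n:ℝ) * s * (u / r) ≤ d * u := by
      have : (n:ℝ) * s * (u / r) = ((n:ℝ) * s / r) * u := by ring
      rw [this]
      exact mul_le_mul_of_nonneg_right hfrac (le_of_lt hu0)
    calc (n:ℝ) * Real.log t = n * s * Real.log u := by rw [hlogt]; ring
      _ ≤ n * s * Real.log r + n * s * (u / r) := by linarith
      _ ≤ n * s * Real.log r + d * u := by linarith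
  have hpow : (1 + t) ^ n ≤ 2 ^ n * Real.exp ((n:ℝ) * Real.log t) := by
    have h5 : (1 + t) ^ n ≤ (2 * t) ^ n :=
      pow_le_pow_left₀ (by linarith) (by linarith) n
    have h6 : Real.exp ((n:ℝ) * Real.log t) = t ^ n := by
      rw [Real.exp_nat_mul, Real.exp_log ht0]
    rw [h6, mul_pow] at *
    exact h5
  calc (1 + t) ^ n ≤ 2 ^ n * Real.exp ((n:ℝ) * Real.log t) := hpow
    _ ≤ 2 ^ n * Real.exp (n * s * Real.log r + d * u) := by
        have := Real.exp_le_exp.mpr hkey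
        nlinarith [Real.exp_pos ((n:ℝ) * Real.log t), (show (0:ℝ) < 2 ^ n by positivity)]
    _ = 2 ^ n * Real.exp (n * s * Real.log r) * Real.exp (d * u) := by
        rw [Real.exp_add]; ring

lemma rk_key (s a b : ℝ) (hs : 1 < s) (ha : 0 < a) (hb : 1 < b)
    (hcond : ∀ x : ℝ, b ≤ x → 1 ≤ x - Real.log (((x - b) / a) ^ s + 1))
    (lam : ℂ) (hlam : a * |lam.im| ^ (1 / s) + b ≤ lam.re) (x : ℝ) (hx : 0 ≤ x) :
    1 ≤ ‖lam - (x + Complex.I * Real.exp x)‖ ∧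
      Real.exp x ≤ (1 + |lam.im|) * ‖lam - (x + Complex.I * Real.exp x)‖ := by
  set w : ℂ := lam - (x + Complex.I * Real.exp x) with hwdef
  have hwre : w.re = lam.re - x := by
    simp [hwdef, Complex.exp_ofReal_re, Complex.exp_ofReal_im]
  have hwim : w.im = lam.im - Real.exp x := by
    simp [hwdef, Complex.exp_ofReal_re, Complex.exp_ofReal_im]
  have hreLe : |w.re| ≤ ‖w‖ := Complex.abs_re_le_norm w
  have himLe : |w.im| ≤ ‖w‖ := Complex.abs_im_le_norm w
  have hb' : b ≤ lam.re := by
    have : (0:ℝ) ≤ a * |lam.im| ^ (1 / s) := by positivity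
    linarith
  have him0 : (0:ℝ) ≤ |lam.im| := abs_nonneg _
  rcases le_or_gt 1 (|lam.im - Real.exp x|) with h1 | h1
  · -- far from the imaginary direction
    have hw1 : 1 ≤ ‖w‖ := le_trans (by rw [hwim]; exact h1) himLe
    refine ⟨hw1, ?_⟩
    have h2 : Real.exp x ≤ |lam.im| + |lam.im - Real.exp x| := by
      have e1 : -(lam.im - Real.exp x) ≤ |lam.im - Real.exp x| := neg_le_abs _
      have e2 : lam.im ≤ |lam.im| := le_abs_self _
      linarith
    have h3 : |lam.im| + |lam.im - Real.exp x| ≤ (1 + |lam.im|) * |lam.im - Real.exp x| := by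
      nlinarith
    have h4 : (1 + |lam.im|) * |lam.im - Real.exp x| ≤ (1 + |lam.im|) * ‖w‖ := by
      have : |w.im| ≤ ‖w‖ := himLe
      rw [hwim] at this
      nlinarith
    linarith
  · -- close to the imaginary direction: use the region condition
    have hex : Real.exp x ≤ |lam.im| + 1 := by
      have e1 : -(lam.im - Real.exp x) ≤ |lam.im - Real.exp x| := neg_le_abs _
      have e2 : lam.im ≤ |lam.im| := le_abs_self _
      linarith
    have him : |lam.im| ≤ ((lam.re - b) / a) ^ s := by
      have h0 : |lam.im| ^ (1 / s) ≤ (lam.re - b) / a := by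
        rw [le_div_iff₀ ha]
        nlinarith [hlam]
      have h2 : (|lam.im| ^ (1 / s) : ℝ) ^ s ≤ ((lam.re - b) / a) ^ s :=
        Real.rpow_le_rpow (Real.rpow_nonneg him0 _) h0 (le_of_lt (lt_trans one_pos hs))
      have hmul : 1 / s * s = 1 := by
        field_simp
      have h3 : (|lam.im| ^ (1 / s) : ℝ) ^ s = |lam.im| := by
        rw [← Real.rpow_mul him0, hmul, Real.rpow_one]
      rw [h3] at h2; exact h2
    have hxle : x ≤ Real.log (((lam.re - b) / a) ^ s + 1) := by
      have e1 : Real.exp x ≤ ((lam.re - b) / a) ^ s + 1 := by linarith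
      have e2 := Real.log_le_log (Real.exp_pos x) e1
      rwa [Real.log_exp] at e2
    have hre : 1 ≤ lam.re - x := by
      have := hcond lam.re hb'
      linarith
    have hw1 : 1 ≤ ‖w‖ := by
      have : 1 ≤ |w.re| := by
        rw [hwre, _root_.abs_of_nonneg (by linarith : (0:ℝ) ≤ lam.re - x)]
        exact hre
      linarith
    refine ⟨hw1, ?_⟩
    nlinarith

lemma rk_ne_zero (s a b : ℝ) (hs : 1 < s) (ha : 0 < a) (hb : 1 < b)
    (hcond : ∀ x : ℝ, b ≤ x → 1 ≤ x - Real.log (((x - b) / a) ^ s + 1))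
    (lam : ℂ) (hlam : a * |lam.im| ^ (1 / s) + b ≤ lam.re) :
    ∀ y : ℝ, lam - (y + Complex.I * Real.exp y) ≠ 0 := by
  intro y
  rcases le_or_gt 0 y with hy | hy
  · have h := (rk_key s a b hs ha hb hcond lam hlam y hy).1
    intro h0
    rw [h0] at h
    simp at h
    linarith
  · intro h0
    have hb' : b ≤ lam.re := by
      have : (0:ℝ) ≤ a * |lam.im| ^ (1 / s) := by positivity
      linarith
    have hre : (lam - (y + Complex.I * Real.exp y)).re = lam.re - y := by
      simp [Complex.exp_ofReal_re, Complex.exp_ofReal_im]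
    rw [h0] at hre
    simp at hre
    linarith

/-- Uniform sub-exponential bound for the derivatives of the resolvent kernel
`g(x) = (λ - (x + ie^x))^{-1}` on the region
`Ω = {λ : Re λ ≥ a|Im λ|^{1/s} + b}`: for every `n` and `d > 0` there is a
constant `C` independent of `λ ∈ Ω` with
`sup_{x ≥ 0} |g^{(n)}(x)| ≤ C e^{d|λ|^{1/s}}`. -/
theorem resolvent_kernel_derivative_bound (s a b : ℝ) (hs : 1 < s) (ha : 0 < a)
    (hb : 1 < b)
    (hcond : ∀ x : ℝ, b ≤ x → 1 ≤ x - Real.log (((x - b) / a) ^ s + 1))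
    (n : ℕ) (d : ℝ) (hd : 0 < d) :
    ∃ C : ℝ, 0 < C ∧
      ∀ lam : ℂ, a * |lam.im| ^ (1 / s) + b ≤ lam.re →
        ∀ x : ℝ, 0 ≤ x →
          ‖iteratedDeriv n
              (fun y : ℝ => (lam - (y + Complex.I * Real.exp y))⁻¹) x‖ ≤
            C * Real.exp (d * ‖lam‖ ^ (1 / s)) := by
  obtain ⟨C₀, hC₀, hC₀le⟩ := poly_absorb n d s hd hs
  set S : ℝ := ((rkTerms n).map (fun t : ℂ × ℕ × ℕ => ‖t.1‖)).sum with hSdef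
  have hS0 : 0 ≤ S := by
    rw [hSdef]
    apply List.sum_nonneg
    intro x hx
    simp only [List.mem_map] at hx
    obtain ⟨t, _, rfl⟩ := hx
    exact norm_nonneg _
  refine ⟨(S + 1) * C₀, by positivity, ?_⟩
  intro lam hlam x hx
  have hne := rk_ne_zero s a b hs ha hb hcond lam hlam
  obtain ⟨hw1, hwE⟩ := rk_key s a b hs ha hb hcond lam hlam x hx
  set M : ℝ := 1 + |lam.im| with hMdef
  have hM1 : 1 ≤ M := by rw [hMdef]; have := abs_nonneg lam.im; linarith
  set w : ℂ := lam - (x + Complex.I * Real.exp x) with hwdef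
  have hGle : ‖w⁻¹‖ ≤ 1 := by
    rw [norm_inv]
    exact inv_le_one_of_one_le₀ hw1
  have hEGle : Real.exp x * ‖w⁻¹‖ ≤ M := by
    rw [norm_inv]
    have hwpos : 0 < ‖w‖ := lt_of_lt_of_le one_pos hw1
    rw [mul_inv_le_iff₀ hwpos]
    linarith [hwE]
  -- per-term bound
  have hterm : ∀ t ∈ rkTerms n, ‖rkVal lam x t‖ ≤ ‖t.1‖ * M ^ n := by
    intro t ht
    obtain ⟨hjk, hkn⟩ := rkTerms_inv n t ht
    obtain ⟨c, j, k⟩ := t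
    simp only [Prod.fst, Prod.snd] at hjk hkn ⊢
    have hjn : j ≤ n := by omega
    obtain ⟨m, hm⟩ : ∃ m, k = j + m := ⟨k - j, by omega⟩
    have hval : ‖rkVal lam x (c, j, k)‖ = ‖c‖ * Real.exp x ^ j * ‖w⁻¹‖ ^ k := by
      simp only [rkVal, norm_mul, norm_pow, Complex.norm_real,
        Real.norm_eq_abs, _root_.abs_of_pos (Real.exp_pos x)]
      rfl
    rw [hval, hm, pow_add, show ‖c‖ * Real.exp x ^ j * (‖w⁻¹‖ ^ j * ‖w⁻¹‖ ^ m)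
      = ‖c‖ * ((Real.exp x * ‖w⁻¹‖) ^ j * ‖w⁻¹‖ ^ m) by rw [mul_pow]; ring]
    have h1 : (Real.exp x * ‖w⁻¹‖) ^ j ≤ M ^ j :=
      pow_le_pow_left₀ (by positivity) hEGle j
    have h2 : ‖w⁻¹‖ ^ m ≤ 1 := pow_le_one₀ (norm_nonneg _) hGle
    have h3 : (Real.exp x * ‖w⁻¹‖) ^ j * ‖w⁻¹‖ ^ m ≤ M ^ j := by
      nlinarith [pow_nonneg (mul_nonneg (le_of_lt (Real.exp_pos x)) (norm_nonneg (w⁻¹))) j,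
        pow_nonneg (norm_nonneg (w⁻¹)) m, pow_pos (lt_of_lt_of_le one_pos hM1) j]
    have h4 : M ^ j ≤ M ^ n := pow_le_pow_right₀ hM1 hjn
    have hc0 : (0:ℝ) ≤ ‖c‖ := norm_nonneg _
    nlinarith
  -- sum the bounds
  have hsum : ∀ l : List (ℂ × ℕ × ℕ), (∀ t ∈ l, ‖rkVal lam x t‖ ≤ ‖t.1‖ * M ^ n) →
      ‖(l.map (rkVal lam x)).sum‖ ≤ (l.map (fun t : ℂ × ℕ × ℕ => ‖t.1‖)).sum * M ^ n := by
    intro l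
    induction l with
    | nil => intro _; simp
    | cons t l ih =>
      intro h
      simp only [List.map_cons, List.sum_cons, add_mul]
      calc ‖rkVal lam x t + (l.map (rkVal lam x)).sum‖
          ≤ ‖rkVal lam x t‖ + ‖(l.map (rkVal lam x)).sum‖ := norm_add_le _ _
        _ ≤ ‖t.1‖ * M ^ n + (l.map (fun t : ℂ × ℕ × ℕ => ‖t.1‖)).sum * M ^ n := by
            have h1 := h t (by simp)
            have h2 := ih (fun u hu => h u (List.mem_cons_of_mem _ hu))
            linarith
  have hbound : ‖iteratedDeriv n (fun y : ℝ => (lam - (y + Complex.I * Real.exp y))⁻¹) x‖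
      ≤ S * M ^ n := by
    rw [rk_formula lam hne n]
    exact hsum (rkTerms n) hterm
  -- absorb the polynomial factor
  have hlamnorm : 1 ≤ ‖lam‖ := by
    have hb' : b ≤ lam.re := by
      have : (0:ℝ) ≤ a * |lam.im| ^ (1 / s) := by positivity
      linarith
    have := Complex.abs_re_le_norm lam
    have := le_abs_self lam.re
    calc (1:ℝ) ≤ b := le_of_lt hb
      _ ≤ lam.re := hb'
      _ ≤ |lam.re| := le_abs_self _
      _ ≤ ‖lam‖ := Complex.abs_re_le_norm lam
  have hMlam : M ≤ 1 + ‖lam‖ := by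
    rw [hMdef]
    have h := Complex.abs_im_le_norm lam
    linarith
  have hMn : M ^ n ≤ (1 + ‖lam‖) ^ n :=
    pow_le_pow_left₀ (by linarith) hMlam n
  have hpoly := hC₀le ‖lam‖ hlamnorm
  have hexp0 : 0 < Real.exp (d * ‖lam‖ ^ (1 / s)) := Real.exp_pos _
  calc ‖iteratedDeriv n (fun y : ℝ => (lam - (y + Complex.I * Real.exp y))⁻¹) x‖
      ≤ S * M ^ n := hbound
    _ ≤ S * ((1 + ‖lam‖) ^ n) := by
        have : (0:ℝ) ≤ M ^ n := pow_nonneg (by linarith) n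
        nlinarith
    _ ≤ S * (C₀ * Real.exp (d * ‖lam‖ ^ (1 / s))) := by nlinarith
    _ ≤ (S + 1) * C₀ * Real.exp (d * ‖lam‖ ^ (1 / s)) := by nlinarith
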